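/- Let a < b be reals, c > 0, and y ∈ ℂ \ [a, b]. Then there exists ξ ∈ ℂ with ξ² = c(y−a)(y−b) and Re(ξ/(y−a)) > 0; moreover for such ξ, Re(ξ/(y−θ)) > 0 for all θ ∈ [a, b]. -/

import Mathlib

open Complex

private lemma key_re_ne_zero (a b c : ℝ) (hab : a < b) (hc : 0 < c)
    (y : ℂ) (hy : y ∉ (fun r : ℝ => (r : ℂ)) '' Set.Icc a b)
    (ξ : ℂ) (hξ : ξ ^ 2 = (c : ℂ) * (y - (a : ℂ)) * (y - (b : ℂ)))
    (θ : ℝ) (hθ : θ ∈ Set.Icc a b) :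
    (ξ / (y - (θ : ℂ))).re ≠ 0 := by
  have hyθ : y - (θ : ℂ) ≠ 0 := by
    intro h
    exact hy ⟨θ, hθ, by rw [sub_eq_zero] at h; exact h.symm⟩
  intro hre0
  set z : ℂ := ξ / (y - (θ : ℂ)) with hz
  have hxz : ξ = z * (y - (θ : ℂ)) := by rw [hz, div_mul_cancel₀ _ hyθ]
  set s : ℝ := z.im with hs
  have hz2 : z ^ 2 = -((s : ℂ) ^ 2) := by
    have : z = (s : ℂ) * I := by
      apply Complex.ext <;> simp [hs, hre0]
    rw [this]; ring_nf; simp [I_sq]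
  have hEq : (c : ℂ) * (y - (a : ℂ)) * (y - (b : ℂ)) + (s : ℂ) ^ 2 * (y - (θ : ℂ)) ^ 2 = 0 := by
    have := hξ
    rw [hxz] at this
    rw [← this]
    rw [show (z * (y - (θ:ℂ))) ^ 2 = z ^ 2 * (y - (θ:ℂ)) ^ 2 by ring, hz2]
    ring
  set p : ℝ := y.re with hp
  set q : ℝ := y.im with hq
  have hyeq : y = (p : ℂ) + (q : ℂ) * I := by
    apply Complex.ext <;> simp [hp, hq]
  rw [hyeq] at hEq
  have hre := congrArg Complex.re hEq
  have him := congrArg Complex.im hEq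
  simp only [Complex.add_re, Complex.add_im, Complex.mul_re, Complex.mul_im, Complex.sub_re,
    Complex.sub_im, Complex.ofReal_re, Complex.ofReal_im, Complex.I_re, Complex.I_im,
    Complex.zero_re, Complex.zero_im, pow_two] at hre him
  ring_nf at hre him
  have hθa := hθ.1
  have hθb := hθ.2
  by_cases hq0 : q = 0
  · have hpnot : p ∉ Set.Icc a b := by
      intro hp'
      exact hy ⟨p, hp', by rw [hyeq, hq0]; simp⟩
    have hpab : (p - a) * (p - b) > 0 := by
      rcases lt_or_ge p a with h | h
      · nlinarith
      · have : b < p := by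
          by_contra hb'; push_neg at hb'; exact hpnot ⟨h, hb'⟩
        nlinarith
    rw [hq0] at hre
    nlinarith [sq_nonneg s, sq_nonneg (p - θ), mul_nonneg (sq_nonneg s) (sq_nonneg (p - θ))]
  · have hq2 : 0 < q ^ 2 := by positivity
    have hs2 : (0:ℝ) ≤ s ^ 2 := sq_nonneg s
    nlinarith [sq_nonneg (c * (2*p - a - b) + 2 * s^2 * (p - θ)), hre, him,
      mul_nonneg (mul_nonneg hc.le hs2) (mul_nonneg (sub_nonneg.2 hθa) (sub_nonneg.2 hθb)),
      mul_pos (mul_pos hc hc) (mul_pos (sub_pos.2 hab) (sub_pos.2 hab)),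
      mul_pos (add_pos_of_pos_of_nonneg hc hs2) hq2]

/-- For reals `a < b`, `c > 0` and `y ∈ ℂ \ [a,b]`, there exists `ξ` with
`ξ² = c(y−a)(y−b)` and `Re(ξ/(y−a)) > 0`; moreover any such `ξ` satisfies
`Re(ξ/(y−θ)) > 0` for all `θ ∈ [a,b]`. -/
theorem exists_sqrt_re_pos_interval (a b c : ℝ) (hab : a < b) (hc : 0 < c)
    (y : ℂ) (hy : y ∉ (fun r : ℝ => (r : ℂ)) '' Set.Icc a b) :
    (∃ ξ : ℂ, ξ ^ 2 = (c : ℂ) * (y - (a : ℂ)) * (y - (b : ℂ))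
        ∧ 0 < (ξ / (y - (a : ℂ))).re) ∧
    ∀ ξ : ℂ, ξ ^ 2 = (c : ℂ) * (y - (a : ℂ)) * (y - (b : ℂ)) →
      0 < (ξ / (y - (a : ℂ))).re →
      ∀ θ : ℝ, θ ∈ Set.Icc a b → 0 < (ξ / (y - (θ : ℂ))).re := by
  have key_ne := key_re_ne_zero a b c hab hc y hy
  have hane : ∀ θ : ℝ, θ ∈ Set.Icc a b → y - (θ : ℂ) ≠ 0 := by
    intro θ hθ h
    exact hy ⟨θ, hθ, by rw [sub_eq_zero] at h; exact h.symm⟩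
  have haI : a ∈ Set.Icc a b := ⟨le_refl a, hab.le⟩
  constructor
  · obtain ⟨ξ₀, hξ₀⟩ :=
      IsAlgClosed.exists_pow_nat_eq ((c : ℂ) * (y - (a : ℂ)) * (y - (b : ℂ))) two_pos
    have hne := key_ne ξ₀ hξ₀ a haI
    rcases lt_or_gt_of_ne hne with h | h
    · refine ⟨-ξ₀, by rw [neg_pow]; simp [hξ₀], ?_⟩
      rw [neg_div, Complex.neg_re]
      linarith
    · exact ⟨ξ₀, hξ₀, h⟩
  · intro ξ hξ hpos θ hθ
    set f : ℝ → ℝ := fun t => (ξ / (y - (t : ℂ))).re with hf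
    have hcont : ContinuousOn f (Set.Icc a b) := by
      apply Complex.continuous_re.comp_continuousOn
      exact ContinuousOn.div continuousOn_const
        (Continuous.continuousOn (by continuity))
        (fun t ht => hane t ht)
    by_contra hneg
    push_neg at hneg
    have hsub : Set.Icc a θ ⊆ Set.Icc a b := Set.Icc_subset_Icc le_rfl hθ.2
    have hiv := intermediate_value_Icc' hθ.1 (hcont.mono hsub)
    have h0 : (0:ℝ) ∈ Set.Icc (f θ) (f a) := ⟨hneg, hpos.le⟩
    obtain ⟨t, ht, hft⟩ := hiv h0
    exact key_ne ξ hξ t (hsub ht) hft
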